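/- arXiv:2410.13990 — 2 statements merged into one kernel-verified Lean document; each statement's English description precedes it below -/
import Mathlib

section
/- Fix integers e ≥ 2, k ≥ 1, and m > 3. The number of integers x with 0 ≤ x < 3^k such that S_{e,3}(x) = m equals Σ_{j=0}^{⌊m/2^e⌋} C(k, j) · C(k − j, m − j·2^e), where C denotes the binomial coefficient (with C(a, c) = 0 when c > a, and k − j interpreted as 0 when j > k). -/
open Finset

def S (e b n : ℕ) : ℕ := ((Nat.digits b n).map (· ^ e)).sum

lemma S_step (e : ℕ) (he : 1 ≤ e) (q r : ℕ) (hr : r < 3) :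
    S e 3 (3 * q + r) = r ^ e + S e 3 q := by
  rcases Nat.eq_zero_or_pos (3 * q + r) with h | h
  · have hq : q = 0 := by omega
    have hr0 : r = 0 := by omega
    subst hq; subst hr0
    simp [S, zero_pow (by omega : e ≠ 0)]
  · rw [S, Nat.digits_def' (by norm_num : 1 < 3) h]
    have h1 : (3 * q + r) % 3 = r := by omega
    have h2 : (3 * q + r) / 3 = q := by omega
    rw [h1, h2]
    simp [S]

def G (e k m a b : ℕ) : ℕ :=
  ∑ j ∈ range a, ∑ i ∈ range b,
    if j * 2 ^ e + i = m then Nat.choose k j * Nat.choose (k - j) i else 0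

lemma G_ext (e k m : ℕ) {a b a' b' : ℕ} (ha : m < a) (hb : m < b) (ha' : m < a') (hb' : m < b') :
    G e k m a b = G e k m a' b' := by
  have h2e : 1 ≤ 2 ^ e := Nat.one_le_two_pow
  have key : ∀ a b, m < a → m < b → G e k m a b = G e k m (m+1) (m+1) := by
    intro a b ha hb
    unfold G
    rw [← Finset.sum_subset (Finset.range_subset_range.2 ha)]
    · apply Finset.sum_congr rfl
      intro j hj
      rw [← Finset.sum_subset (Finset.range_subset_range.2 hb)]
      intro i hi hni
      simp only [Finset.mem_range] at hi hni
      rw [if_neg]; omega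
    · intro j hj hnj
      simp only [Finset.mem_range] at hj hnj
      apply Finset.sum_eq_zero
      intro i hi
      have : j ≤ j * 2 ^ e := Nat.le_mul_of_pos_right _ (by positivity)
      rw [if_neg]; omega
  rw [key a b ha hb, key a' b' ha' hb']

lemma G_target (e k m : ℕ) :
    G e k m (m+1) (m+1) =
      ∑ j ∈ Finset.range (m / 2 ^ e + 1),
        Nat.choose k j * Nat.choose (k - j) (m - j * 2 ^ e) := by
  have h2e : 0 < 2 ^ e := pow_pos (by norm_num) _
  have inner : ∀ j, (∑ i ∈ range (m+1),
      if j * 2 ^ e + i = m then Nat.choose k j * Nat.choose (k - j) i else 0)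
      = if j * 2 ^ e ≤ m then Nat.choose k j * Nat.choose (k - j) (m - j * 2 ^ e) else 0 := by
    intro j
    by_cases h : j * 2 ^ e ≤ m
    · rw [if_pos h, Finset.sum_eq_single (m - j * 2 ^ e)]
      · rw [if_pos (by omega)]
      · intro i _ hne
        rw [if_neg (by omega)]
      · intro hmem
        exact absurd (Finset.mem_range.2 (by omega)) hmem
    · rw [if_neg h]
      apply Finset.sum_eq_zero
      intro i _
      rw [if_neg (by omega)]
  unfold G
  rw [Finset.sum_congr rfl (fun j _ => inner j)]
  have hsub : Finset.range (m / 2 ^ e + 1) ⊆ Finset.range (m + 1) := by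
    apply Finset.range_subset_range.2
    have : m / 2 ^ e ≤ m := Nat.div_le_self _ _
    omega
  have hzero : ∀ j ∈ Finset.range (m+1), j ∉ Finset.range (m / 2 ^ e + 1) →
      (if j * 2 ^ e ≤ m then Nat.choose k j * Nat.choose (k - j) (m - j * 2 ^ e) else 0) = 0 := by
    intro j hj hnj
    simp only [Finset.mem_range] at hj hnj
    rw [if_neg]
    intro hle
    have := (Nat.le_div_iff_mul_le h2e).2 hle
    omega
  rw [← Finset.sum_subset hsub hzero]
  apply Finset.sum_congr rfl
  intro j hj
  simp only [Finset.mem_range] at hj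
  rw [if_pos]
  exact (Nat.le_div_iff_mul_le h2e).1 (by omega)

lemma F_step (e : ℕ) (he : 1 ≤ e) (k m : ℕ) :
    ((range (3 ^ (k+1))).filter (fun x => S e 3 x = m)).card
      = ((range (3 ^ k)).filter (fun x => S e 3 x = m)).card
        + ((range (3 ^ k)).filter (fun x => 1 + S e 3 x = m)).card
        + ((range (3 ^ k)).filter (fun x => 2 ^ e + S e 3 x = m)).card := by
  rw [Finset.card_filter, Finset.card_filter, Finset.card_filter, Finset.card_filter]
  have step1 : ∑ x ∈ range (3 ^ (k+1)), (if S e 3 x = m then 1 else 0)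
      = ∑ p ∈ range (3 ^ k) ×ˢ range 3, (if S e 3 (3 * p.1 + p.2) = m then 1 else 0) := by
    apply Finset.sum_nbij' (i := fun x => ((x / 3 : ℕ), (x % 3 : ℕ)))
      (j := fun p => 3 * p.1 + p.2)
    · intro x hx
      simp only [Finset.mem_range] at hx
      simp only [Finset.mem_product, Finset.mem_range]
      constructor
      · have : 3 ^ (k+1) = 3 * 3 ^ k := by ring
        rw [this] at hx
        omega
      · omega
    · intro p hp
      simp only [Finset.mem_product, Finset.mem_range] at hp
      simp only [Finset.mem_range]
      have : 3 ^ (k+1) = 3 * 3 ^ k := by ring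
      omega
    · intro x hx
      omega
    · intro p hp
      simp only [Finset.mem_product, Finset.mem_range] at hp
      simp only [Prod.ext_iff]
      omega
    · intro x hx
      have h3 : 3 * (x / 3) + x % 3 = x := by omega
      rw [h3]
  rw [step1, Finset.sum_product]
  have step2 : ∀ q ∈ range (3 ^ k),
      (∑ r ∈ range 3, if S e 3 (3 * q + r) = m then 1 else 0)
        = (if S e 3 q = m then 1 else 0) + (if 1 + S e 3 q = m then 1 else 0)
          + (if 2 ^ e + S e 3 q = m then 1 else 0) := by
    intro q _
    have hsum : ∀ f : ℕ → ℕ, ∑ r ∈ range 3, f r = f 0 + f 1 + f 2 := by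
      intro f
      show ∑ r ∈ range (2+1), f r = _
      rw [Finset.sum_range_succ]
      show ∑ r ∈ range (1+1), f r + _ = _
      rw [Finset.sum_range_succ, Finset.sum_range_one]
    rw [hsum]
    rw [S_step e he q 0 (by norm_num), S_step e he q 1 (by norm_num),
      S_step e he q 2 (by norm_num)]
    rw [zero_pow (by omega : e ≠ 0), one_pow, zero_add]
  rw [Finset.sum_congr rfl step2, Finset.sum_add_distrib, Finset.sum_add_distrib]

lemma choose_mul_pascal (k j i : ℕ) :
    Nat.choose k j * Nat.choose (k + 1 - j) (i + 1)
      = Nat.choose k j * Nat.choose (k - j) (i + 1) + Nat.choose k j * Nat.choose (k - j) i := by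
  rcases le_or_gt j k with h | h
  · have h1 : k + 1 - j = (k - j) + 1 := by omega
    rw [h1, Nat.choose_succ_succ]
    ring
  · simp [Nat.choose_eq_zero_of_lt h]

lemma G_rec (e : ℕ) (he : 1 ≤ e) (k m : ℕ) :
    G e (k+1) m (m+1) (m+1)
      = G e k m (m+1) (m+1)
        + (if 1 ≤ m then G e k (m-1) m m else 0)
        + (if 2 ^ e ≤ m then G e k (m - 2 ^ e) (m - 2 ^ e + 1) (m - 2 ^ e + 1) else 0) := by
  have h2e : 1 ≤ 2 ^ e := Nat.one_le_two_pow
  rw [G_ext e (k+1) m (by omega) (by omega) (show m < m + 2 by omega) (show m < m + 2 by omega)]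
  -- abbreviations
  set c := 2 ^ e with hc
  -- LHS as explicit double sum
  have peelj :
      G e (k+1) m (m+2) (m+2)
        = (∑ j ∈ range (m+1), ∑ i ∈ range (m+2),
            if (j+1) * c + i = m then Nat.choose (k+1) (j+1) * Nat.choose (k+1-(j+1)) i else 0)
          + ∑ i ∈ range (m+2),
              if 0 * c + i = m then Nat.choose (k+1) 0 * Nat.choose (k+1-0) i else 0 := by
    exact Finset.sum_range_succ'
      (fun j => ∑ i ∈ range (m+2),
        if j * c + i = m then Nat.choose (k+1) j * Nat.choose (k+1-j) i else 0) (m+1)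
  have j0 : ∀ K : ℕ, (∑ i ∈ range (m+2),
      if 0 * c + i = m then Nat.choose K 0 * Nat.choose (K-0) i else 0)
      = Nat.choose K m := by
    intro K
    have : ∀ i ∈ range (m+2), (if 0 * c + i = m then Nat.choose K 0 * Nat.choose (K-0) i else 0)
        = if i = m then Nat.choose K i else 0 := by
      intro i _
      rcases eq_or_ne i m with h | h
      · simp [h]
      · rw [if_neg (by omega), if_neg h]
    rw [Finset.sum_congr rfl this, Finset.sum_ite_eq' (range (m+2))]
    rw [if_pos (Finset.mem_range.2 (by omega))]
  have point : ∀ j i : ℕ,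
      (if (j+1) * c + i = m then Nat.choose (k+1) (j+1) * Nat.choose (k+1-(j+1)) i else 0)
        = (if (j+1) * c + i = m then Nat.choose k (j+1) * Nat.choose (k-j) i else 0)
          + (if j * c + c + i = m then Nat.choose k j * Nat.choose (k-j) i else 0) := by
    intro j i
    have hs : k + 1 - (j+1) = k - j := by omega
    have hmul : (j+1) * c = j * c + c := by ring
    have hcc : Nat.choose (k+1) (j+1) = Nat.choose k j + Nat.choose k (j+1) :=
      Nat.choose_succ_succ _ _
    rw [hs, hmul, hcc]
    by_cases h : j * c + c + i = m
    · rw [if_pos h, if_pos h, if_pos h]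
      ring
    · rw [if_neg h, if_neg h, if_neg h]
  have split :
      (∑ j ∈ range (m+1), ∑ i ∈ range (m+2),
          if (j+1) * c + i = m then Nat.choose (k+1) (j+1) * Nat.choose (k+1-(j+1)) i else 0)
        = (∑ j ∈ range (m+1), ∑ i ∈ range (m+2),
            if (j+1) * c + i = m then Nat.choose k (j+1) * Nat.choose (k-j) i else 0)
          + (∑ j ∈ range (m+1), ∑ i ∈ range (m+2),
              if j * c + c + i = m then Nat.choose k j * Nat.choose (k-j) i else 0) := by
    rw [← Finset.sum_add_distrib]
    apply Finset.sum_congr rfl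
    intro j _
    rw [← Finset.sum_add_distrib]
    apply Finset.sum_congr rfl
    intro i _
    exact point j i
  -- the c-shifted part
  have Bpart :
      (∑ j ∈ range (m+1), ∑ i ∈ range (m+2),
          if j * c + c + i = m then Nat.choose k j * Nat.choose (k-j) i else 0)
        = if c ≤ m then G e k (m - c) (m - c + 1) (m - c + 1) else 0 := by
    by_cases h : c ≤ m
    · rw [if_pos h]
      have : (∑ j ∈ range (m+1), ∑ i ∈ range (m+2),
          if j * c + c + i = m then Nat.choose k j * Nat.choose (k-j) i else 0)
          = G e k (m - c) (m+1) (m+2) := by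
        unfold G
        apply Finset.sum_congr rfl
        intro j _
        apply Finset.sum_congr rfl
        intro i _
        rw [← hc]
        apply if_congr ?_ rfl rfl
        omega
      rw [this]
      exact G_ext e k (m-c) (by omega) (by omega) (by omega) (by omega)
    · rw [if_neg h]
      apply Finset.sum_eq_zero
      intro j _
      apply Finset.sum_eq_zero
      intro i _
      rw [if_neg (by omega)]
  -- the V sum
  have hV :
      (∑ j ∈ range (m+2), ∑ i ∈ range (m+2),
          if j * c + i = m then Nat.choose k j * Nat.choose (k+1-j) i else 0)
        = (∑ j ∈ range (m+1), ∑ i ∈ range (m+2),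
            if (j+1) * c + i = m then Nat.choose k (j+1) * Nat.choose (k-j) i else 0)
          + Nat.choose (k+1) m := by
    have h1 := Finset.sum_range_succ'
      (fun j => ∑ i ∈ range (m+2),
        if j * c + i = m then Nat.choose k j * Nat.choose (k+1-j) i else 0) (m+1)
    rw [h1]
    congr 1
    · apply Finset.sum_congr rfl
      intro j _
      apply Finset.sum_congr rfl
      intro i _
      rw [show k + 1 - (j+1) = k - j by omega]
    · have : ∀ i ∈ range (m+2),
          (if 0 * c + i = m then Nat.choose k 0 * Nat.choose (k+1-0) i else 0)
            = if 0 * c + i = m then Nat.choose (k+1) 0 * Nat.choose (k+1-0) i else 0 := by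
        intro i _
        simp
      rw [Finset.sum_congr rfl this, j0 (k+1)]
  -- peel i inside V
  have pointi : ∀ j i : ℕ,
      (if j * c + (i+1) = m then Nat.choose k j * Nat.choose (k+1-j) (i+1) else 0)
        = (if j * c + (i+1) = m then Nat.choose k j * Nat.choose (k-j) (i+1) else 0)
          + (if j * c + i + 1 = m then Nat.choose k j * Nat.choose (k-j) i else 0) := by
    intro j i
    have h2 : j * c + (i+1) = j * c + i + 1 := by ring
    rw [h2]
    by_cases h : j * c + i + 1 = m
    · rw [if_pos h, if_pos h, if_pos h, choose_mul_pascal]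
    · rw [if_neg h, if_neg h, if_neg h]
  have hVi :
      (∑ j ∈ range (m+2), ∑ i ∈ range (m+2),
          if j * c + i = m then Nat.choose k j * Nat.choose (k+1-j) i else 0)
        = (∑ j ∈ range (m+2), ∑ i ∈ range (m+2),
            if j * c + i = m then Nat.choose k j * Nat.choose (k-j) i else 0)
          + (∑ j ∈ range (m+2), ∑ i ∈ range (m+1),
              if j * c + i + 1 = m then Nat.choose k j * Nat.choose (k-j) i else 0) := by
    rw [← Finset.sum_add_distrib]
    apply Finset.sum_congr rfl
    intro j _
    have l1 := Finset.sum_range_succ'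
      (fun i => if j * c + i = m then Nat.choose k j * Nat.choose (k+1-j) i else 0) (m+1)
    have l2 := Finset.sum_range_succ'
      (fun i => if j * c + i = m then Nat.choose k j * Nat.choose (k-j) i else 0) (m+1)
    rw [l1, l2]
    have l3 : (if j * c + 0 = m then Nat.choose k j * Nat.choose (k+1-j) 0 else 0)
        = if j * c + 0 = m then Nat.choose k j * Nat.choose (k-j) 0 else 0 := by
      simp
    rw [l3, Finset.sum_congr rfl (fun i (_ : i ∈ range (m+1)) => pointi j i),
      Finset.sum_add_distrib]
    ring
  -- the (m-1)-shifted part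
  have W2 :
      (∑ j ∈ range (m+2), ∑ i ∈ range (m+1),
          if j * c + i + 1 = m then Nat.choose k j * Nat.choose (k-j) i else 0)
        = if 1 ≤ m then G e k (m-1) m m else 0 := by
    by_cases h : 1 ≤ m
    · rw [if_pos h]
      have : (∑ j ∈ range (m+2), ∑ i ∈ range (m+1),
          if j * c + i + 1 = m then Nat.choose k j * Nat.choose (k-j) i else 0)
          = G e k (m-1) (m+2) (m+1) := by
        unfold G
        apply Finset.sum_congr rfl
        intro j _
        apply Finset.sum_congr rfl
        intro i _
        rw [← hc]
        apply if_congr ?_ rfl rfl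
        omega
      rw [this]
      exact G_ext e k (m-1) (by omega) (by omega) (by omega) (by omega)
    · rw [if_neg h]
      apply Finset.sum_eq_zero
      intro j _
      apply Finset.sum_eq_zero
      intro i _
      rw [if_neg (by omega)]
  have hGrw : G e k m (m+1) (m+1) = G e k m (m+2) (m+2) :=
    G_ext e k m (by omega) (by omega) (by omega) (by omega)
  have hGexp2 : G e k m (m+2) (m+2)
      = ∑ j ∈ range (m+2), ∑ i ∈ range (m+2),
          if j * c + i = m then Nat.choose k j * Nat.choose (k-j) i else 0 := rfl
  rw [← hGexp2] at hVi
  rw [W2, ← hGrw] at hVi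
  rw [peelj, split, Bpart, j0 (k+1)]
  have key : (∑ j ∈ range (m+1), ∑ i ∈ range (m+2),
      if (j+1) * c + i = m then Nat.choose k (j+1) * Nat.choose (k-j) i else 0)
      + Nat.choose (k+1) m
      = G e k m (m+1) (m+1) + (if 1 ≤ m then G e k (m-1) m m else 0) := by
    rw [← hV, hVi]
  calc (∑ j ∈ range (m+1), ∑ i ∈ range (m+2),
          if (j+1) * c + i = m then Nat.choose k (j+1) * Nat.choose (k-j) i else 0)
        + (if c ≤ m then G e k (m - c) (m - c + 1) (m - c + 1) else 0)
        + Nat.choose (k+1) m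
      = ((∑ j ∈ range (m+1), ∑ i ∈ range (m+2),
          if (j+1) * c + i = m then Nat.choose k (j+1) * Nat.choose (k-j) i else 0)
        + Nat.choose (k+1) m)
        + (if c ≤ m then G e k (m - c) (m - c + 1) (m - c + 1) else 0) := by ring
    _ = G e k m (m+1) (m+1) + (if 1 ≤ m then G e k (m-1) m m else 0)
        + (if c ≤ m then G e k (m - c) (m - c + 1) (m - c + 1) else 0) := by rw [key]

lemma Fcount (e : ℕ) (he : 1 ≤ e) :
    ∀ k m, ((range (3 ^ k)).filter (fun x => S e 3 x = m)).card = G e k m (m+1) (m+1) := by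
  have h2e : 1 ≤ 2 ^ e := Nat.one_le_two_pow
  intro k
  induction k with
  | zero =>
    intro m
    have hL : ((range (3 ^ 0)).filter (fun x => S e 3 x = m)).card
        = if m = 0 then 1 else 0 := by
      rcases eq_or_ne m 0 with h | h
      · subst h
        rw [if_pos rfl]
        rw [show ((3:ℕ) ^ 0) = 1 from rfl, Finset.range_one]
        rw [Finset.filter_singleton, if_pos (by simp [S])]
        simp
      · rw [if_neg h]
        rw [Finset.card_eq_zero]
        apply Finset.filter_eq_empty_iff.2
        intro x hx
        simp only [pow_zero, Finset.mem_range] at hx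
        interval_cases x
        simp [S]
        omega
    rw [hL]
    rcases eq_or_ne m 0 with h | h
    · subst h
      rw [if_pos rfl]
      simp [G]
    · rw [if_neg h]
      symm
      unfold G
      apply Finset.sum_eq_zero
      intro j _
      apply Finset.sum_eq_zero
      intro i _
      rcases Nat.eq_zero_or_pos j with hj | hj
      · subst hj
        rcases Nat.eq_zero_or_pos i with hi | hi
        · subst hi
          rw [if_neg (by omega)]
        · rw [Nat.choose_eq_zero_of_lt (by omega : (0:ℕ) < i)]
          simp
      · rw [Nat.choose_eq_zero_of_lt (by omega : (0:ℕ) < j)]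
        simp
  | succ k ih =>
    intro m
    rw [F_step e he k m]
    rw [ih m]
    have hB : ((range (3 ^ k)).filter (fun x => 1 + S e 3 x = m)).card
        = if 1 ≤ m then G e k (m-1) m m else 0 := by
      by_cases h : 1 ≤ m
      · rw [if_pos h]
        have : (range (3 ^ k)).filter (fun x => 1 + S e 3 x = m)
            = (range (3 ^ k)).filter (fun x => S e 3 x = m - 1) := by
          apply Finset.filter_congr
          intro x _
          constructor <;> intro hx <;> omega
        rw [this, ih (m-1)]
        exact G_ext e k (m-1) (by omega) (by omega) (by omega) (by omega)
      · rw [if_neg h]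
        rw [Finset.card_eq_zero]
        apply Finset.filter_eq_empty_iff.2
        intro x _
        omega
    have hC : ((range (3 ^ k)).filter (fun x => 2 ^ e + S e 3 x = m)).card
        = if 2 ^ e ≤ m then G e k (m - 2 ^ e) (m - 2 ^ e + 1) (m - 2 ^ e + 1) else 0 := by
      by_cases h : 2 ^ e ≤ m
      · rw [if_pos h]
        have : (range (3 ^ k)).filter (fun x => 2 ^ e + S e 3 x = m)
            = (range (3 ^ k)).filter (fun x => S e 3 x = m - 2 ^ e) := by
          apply Finset.filter_congr
          intro x _
          constructor <;> intro hx <;> omega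
        rw [this, ih (m - 2 ^ e)]
      · rw [if_neg h]
        rw [Finset.card_eq_zero]
        apply Finset.filter_eq_empty_iff.2
        intro x _
        omega
    rw [hB, hC, G_rec e he k m]

theorem stmt_5 (e k m : ℕ) (he : 2 ≤ e) (hk : 1 ≤ k) (hm : 3 < m) :
    ((Finset.range (3 ^ k)).filter (fun x => S e 3 x = m)).card =
      ∑ j ∈ Finset.range (m / 2 ^ e + 1),
        Nat.choose k j * Nat.choose (k - j) (m - j * 2 ^ e) := by
  rw [Fcount e (by omega) k m, G_target]
end

section
/- Fix integers b ≥ 2, e ≥ 2, k ≥ 1, and m ≥ 1. The number of integers x with 0 ≤ x < b^k such that S_{e,b}(x) = m equals the sum, over all tuples (j_2, j_3, …, j_{b−1}) of nonnegative integers satisfying Σ_{i=2}^{b−1} j_i · i^e ≤ m, of the product [Π_{i=2}^{b−1} C(k − t_i, j_i)] · C(k − t_1, m − s_1), where for 1 ≤ i ≤ b−1 we set t_i = Σ_{x=i+1}^{b−1} j_x and s_1 = Σ_{x=2}^{b−1} j_x · x^e, C denotes the binomial coefficient (with C(a, c) = 0 when c > a, and natural subtraction k − t_i interpreted as 0 when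 t_i > k). Here j_i is the number of base-b digits equal to i, and m − s_1 is the forced number of digits equal to 1; only finitely many tuples give a nonzero term, so the sum is well defined. -/
/-- Extend a tuple `(j_2, …, j_{b-1})`, given as a dependent function on the
index set `Finset.Icc 2 (b-1)`, to a plain function `ℕ → ℕ` vanishing elsewhere. -/
def extendTuple (b : ℕ) (f : (i : ℕ) → i ∈ Finset.Icc 2 (b - 1) → ℕ) : ℕ → ℕ :=
  fun i => if h : i ∈ Finset.Icc 2 (b - 1) then f i h else 0

open Finset

/-- number of positions where `d` takes the value `i` -/
private def cnt {α : Type*} [Fintype α] (d : α → ℕ) (i : ℕ) : ℕ :=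
  (Finset.univ.filter fun p => d p = i).card

private instance cntDecidable {α : Type*} [Fintype α] (n : ℕ) (js : ℕ → ℕ) :
    DecidablePred (fun d : α → ℕ => ∀ i ∈ Finset.Icc 1 n, cnt d i = js i) :=
  fun _ => inferInstance

/-- The set of functions with values in `[0, n]` supported on `s`, having exactly `js i`
positions with value `i` for each `1 ≤ i ≤ n`. -/
private def Dset {α : Type*} [Fintype α] [DecidableEq α] (n : ℕ) (s : Finset α)
    (js : ℕ → ℕ) : Finset (α → ℕ) :=
  (Fintype.piFinset fun p => if p ∈ s then Finset.range (n + 1) else ({0} : Finset ℕ)).filter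
    fun d => ∀ i ∈ Finset.Icc 1 n, cnt d i = js i

private lemma countC {α : Type*} [Fintype α] [DecidableEq α] (n : ℕ) :
    ∀ (s : Finset α) (js : ℕ → ℕ),
    (Dset n s js).card
      = ∏ i ∈ Finset.Icc 1 n,
          Nat.choose (s.card - ∑ x ∈ Finset.Icc (i + 1) n, js x) (js i) := by
  induction n with
  | zero =>
    intro s js
    unfold Dset
    rw [Finset.filter_true_of_mem (fun d _ i hi => by rw [Finset.mem_Icc] at hi; omega),
      Fintype.card_piFinset]
    rw [show Finset.Icc 1 0 = (∅ : Finset ℕ) by simp, Finset.prod_empty]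
    simp [apply_ite Finset.card]
  | succ n ih =>
    intro s js
    have hmap : ∀ d ∈ Dset (n + 1) s js,
        (Finset.univ.filter fun p => d p = n + 1) ∈ s.powersetCard (js (n + 1)) := by
      intro d hd
      simp only [Dset, Finset.mem_coe, Finset.mem_filter, Fintype.mem_piFinset] at hd
      rw [Finset.mem_powersetCard]
      constructor
      · intro p hp
        simp only [Finset.mem_filter, Finset.mem_univ, true_and] at hp
        by_contra hps
        have := hd.1 p
        rw [if_neg hps] at this
        simp only [Finset.mem_singleton] at this
        omega
      · exact hd.2 (n + 1) (by simp)
    rw [Finset.card_eq_sum_card_fiberwise hmap]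
    have hfib : ∀ T ∈ s.powersetCard (js (n + 1)),
        ((Dset (n + 1) s js).filter
            fun d => (Finset.univ.filter fun p => d p = n + 1) = T).card
          = ∏ i ∈ Finset.Icc 1 n,
              Nat.choose (s.card - js (n + 1) - ∑ x ∈ Finset.Icc (i + 1) n, js x) (js i) := by
      intro T hT
      rw [Finset.mem_powersetCard] at hT
      have hcards : (s \ T).card = s.card - js (n + 1) := by
        rw [Finset.card_sdiff_of_subset hT.1, hT.2]
      have key : ((Dset (n + 1) s js).filter
            fun d => (Finset.univ.filter fun p => d p = n + 1) = T).card
          = (Dset n (s \ T) js).card := by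
        apply Finset.card_nbij' (i := fun d p => if d p = n + 1 then 0 else d p)
          (j := fun d p => if p ∈ T then n + 1 else d p)
        · -- forward membership
          intro d hd
          simp only [Dset, Finset.mem_coe, Finset.mem_filter, Fintype.mem_piFinset] at hd ⊢
          obtain ⟨⟨hpi, hcnt⟩, hTe⟩ := hd
          have hiff : ∀ p, p ∈ T ↔ d p = n + 1 := by
            intro p; rw [← hTe]; simp
          constructor
          · intro p
            by_cases h : d p = n + 1
            · have hpT : p ∈ T := (hiff p).2 h
              have : p ∉ s \ T := by simp [hpT]
              rw [if_neg this]
              simp [h]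
            · by_cases hps : p ∈ s
              · have hr : d p ∈ Finset.range (n + 1 + 1) := by
                  have := hpi p; rwa [if_pos hps] at this
                have hplt : d p < n + 1 := by
                  simp only [Finset.mem_range] at hr; omega
                have hpT : p ∉ T := fun hh => h ((hiff p).1 hh)
                rw [if_pos (Finset.mem_sdiff.2 ⟨hps, hpT⟩)]
                simp [h, hplt]
              · have h0 : d p = 0 := by
                  have := hpi p; rw [if_neg hps] at this; simpa using this
                have : p ∉ s \ T := by simp [hps]
                rw [if_neg this]
                simp [h, h0]
          · intro i hi
            rw [← hcnt i (by rw [Finset.mem_Icc] at hi ⊢; omega)]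
            unfold cnt
            congr 1
            ext p
            simp only [Finset.mem_filter, Finset.mem_univ, true_and]
            rw [Finset.mem_Icc] at hi
            by_cases h : d p = n + 1 <;> simp [h] <;> omega
        · -- backward membership
          intro d' hd'
          simp only [Dset, Finset.mem_coe, Finset.mem_filter, Fintype.mem_piFinset] at hd' ⊢
          obtain ⟨hpi, hcnt⟩ := hd'
          have hval : ∀ p, p ∉ T → (p ∈ s \ T → d' p < n + 1) ∧ (p ∉ s → d' p = 0) := by
            intro p _
            constructor
            · intro hmem
              have := hpi p; rw [if_pos hmem] at this; simpa using this
            · intro hps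
              have : p ∉ s \ T := by simp [hps]
              have h2 := hpi p; rw [if_neg this] at h2; simpa using h2
          have hT0 : ∀ p, p ∈ T → d' p = 0 := by
            intro p hp
            have : p ∉ s \ T := by simp [hp]
            have h2 := hpi p; rw [if_neg this] at h2; simpa using h2
          have hiff : ∀ p, (if p ∈ T then n + 1 else d' p) = n + 1 ↔ p ∈ T := by
            intro p
            by_cases hp : p ∈ T
            · simp [hp]
            · simp only [if_neg hp]
              constructor
              · intro h
                exfalso
                by_cases hmem : p ∈ s \ T
                · have := (hval p hp).1 hmem; omega
                · have h2 := hpi p; rw [if_neg hmem] at h2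
                  simp only [Finset.mem_singleton] at h2; omega
              · intro h; exact absurd h hp
          refine ⟨⟨?_, ?_⟩, ?_⟩
          · intro p
            by_cases hp : p ∈ T
            · rw [if_pos hp, if_pos (hT.1 hp)]
              simp
            · rw [if_neg hp]
              by_cases hps : p ∈ s
              · have hmem : p ∈ s \ T := Finset.mem_sdiff.2 ⟨hps, hp⟩
                have := (hval p hp).1 hmem
                rw [if_pos hps]
                simp only [Finset.mem_range]
                omega
              · rw [if_neg hps]
                simp [(hval p hp).2 hps]
          · intro i hi
            rw [Finset.mem_Icc] at hi
            by_cases hitop : i = n + 1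
            · subst hitop
              unfold cnt
              have : (Finset.univ.filter fun p => (if p ∈ T then n + 1 else d' p) = n + 1) = T := by
                ext p
                simp only [Finset.mem_filter, Finset.mem_univ, true_and]
                exact hiff p
              rw [this, hT.2]
            · have hin : i ∈ Finset.Icc 1 n := by rw [Finset.mem_Icc]; omega
              rw [← hcnt i hin]
              unfold cnt
              congr 1
              ext p
              simp only [Finset.mem_filter, Finset.mem_univ, true_and]
              by_cases hp : p ∈ T
              · simp only [if_pos hp]
                have := hT0 p hp
                constructor
                · intro h; omega
                · intro h; omega
              · simp [hp]
          · ext p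
            simp only [Finset.mem_filter, Finset.mem_univ, true_and]
            exact hiff p
        · -- left inverse
          intro d hd
          simp only [Dset, Finset.mem_coe, Finset.mem_filter, Fintype.mem_piFinset] at hd
          obtain ⟨⟨hpi, _⟩, hTe⟩ := hd
          have hiff : ∀ p, p ∈ T ↔ d p = n + 1 := by
            intro p; rw [← hTe]; simp
          funext p
          by_cases hp : p ∈ T
          · simp [hp, (hiff p).1 hp]
          · have : d p ≠ n + 1 := fun h => hp ((hiff p).2 h)
            simp [hp, this]
        · -- right inverse
          intro d' hd'
          simp only [Dset, Finset.mem_coe, Finset.mem_filter, Fintype.mem_piFinset] at hd'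
          obtain ⟨hpi, _⟩ := hd'
          funext p
          by_cases hp : p ∈ T
          · have : p ∉ s \ T := by simp [hp]
            have h2 := hpi p; rw [if_neg this] at h2
            simp only [Finset.mem_singleton] at h2
            simp [hp, h2]
          · have : d' p ≠ n + 1 := by
              by_cases hmem : p ∈ s \ T
              · have := hpi p; rw [if_pos hmem] at this
                simp only [Finset.mem_range] at this; omega
              · have := hpi p; rw [if_neg hmem] at this
                simp only [Finset.mem_singleton] at this; omega
            simp [hp, this]
      rw [key, ih (s \ T) js, hcards]
    rw [Finset.sum_congr rfl hfib, Finset.sum_const, Finset.card_powersetCard, smul_eq_mul]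
    rw [Finset.prod_Icc_succ_top (by omega : 1 ≤ n + 1)]
    have hempty : Finset.Icc (n + 1 + 1) (n + 1) = (∅ : Finset ℕ) := Finset.Icc_eq_empty (by omega)
    rw [hempty, Finset.sum_empty, Nat.sub_zero, mul_comm]
    congr 1
    apply Finset.prod_congr rfl
    intro i hi
    rw [Finset.mem_Icc] at hi
    rw [Finset.sum_Icc_succ_top (by omega : i + 1 ≤ n + 1)]
    congr 1
    omega

private lemma S_eq_sum (b e : ℕ) (hb : 2 ≤ b) (he : 1 ≤ e) :
    ∀ k x, x < b ^ k → S e b x = ∑ p ∈ Finset.range k, (x / b ^ p % b) ^ e := by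
  intro k
  induction k with
  | zero =>
    intro x hx
    have : x = 0 := by simpa using hx
    subst this
    simp [S]
  | succ k ih =>
    intro x hx
    rcases Nat.eq_zero_or_pos x with h0 | h0
    · subst h0
      simp [S, zero_pow (by omega : e ≠ 0)]
    · have hd : S e b x = (x % b) ^ e + S e b (x / b) := by
        rw [S, Nat.digits_def' (by omega : 1 < b) h0]
        simp [S]
      have hdivlt : x / b < b ^ k := by
        apply Nat.div_lt_of_lt_mul
        rw [← pow_succ']
        exact hx
      rw [hd, ih (x / b) hdivlt, Finset.sum_range_succ']
      rw [add_comm]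
      congr 1
      · apply Finset.sum_congr rfl
        intro p _
        rw [Nat.div_div_eq_div_mul, ← pow_succ']
      · simp

private lemma sum_digits_facts (b k : ℕ) (d : Fin k → ℕ) (hd : ∀ p, d p < b) :
    (∑ p : Fin k, d p * b ^ (p : ℕ)) < b ^ k ∧
      ∀ p : Fin k, (∑ q : Fin k, d q * b ^ (q : ℕ)) / b ^ (p : ℕ) % b = d p := by
  set F : Fin k → Fin b := fun p => ⟨d p, hd p⟩ with hF
  have hval : ∑ p : Fin k, d p * b ^ (p : ℕ) = (finFunctionFinEquiv F : ℕ) := by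
    rw [finFunctionFinEquiv_apply]
  constructor
  · rw [hval]
    exact (finFunctionFinEquiv F).isLt
  · intro p
    have h2 := finFunctionFinEquiv_symm_apply_val (finFunctionFinEquiv F) p
    rw [Equiv.symm_apply_apply] at h2
    rw [hval, ← h2]

private lemma digits_sum_eq (b k x : ℕ) (hx : x < b ^ k) :
    ∑ p : Fin k, (x / b ^ (p : ℕ) % b) * b ^ (p : ℕ) = x := by
  set X : Fin (b ^ k) := ⟨x, hx⟩ with hX
  have h1 := finFunctionFinEquiv_apply (finFunctionFinEquiv.symm X)
  rw [Equiv.apply_symm_apply] at h1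
  have h2 : ∀ p : Fin k, ((finFunctionFinEquiv.symm X) p : ℕ) = x / b ^ (p : ℕ) % b := by
    intro p
    exact finFunctionFinEquiv_symm_apply_val X p
  calc ∑ p : Fin k, (x / b ^ (p : ℕ) % b) * b ^ (p : ℕ)
      = ∑ p : Fin k, ((finFunctionFinEquiv.symm X) p : ℕ) * b ^ (p : ℕ) := by
        apply Finset.sum_congr rfl; intro p _; rw [h2]
    _ = (X : ℕ) := h1.symm
    _ = x := rfl

private lemma stepA (b e k m : ℕ) (hb : 2 ≤ b) (he : 1 ≤ e) :
    ((Finset.range (b ^ k)).filter fun x => S e b x = m).card =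
      ((Fintype.piFinset fun _ : Fin k => Finset.range b).filter
        fun d => ∑ p : Fin k, d p ^ e = m).card := by
  apply Finset.card_nbij' (i := fun x (p : Fin k) => x / b ^ (p : ℕ) % b)
    (j := fun d => ∑ p : Fin k, d p * b ^ (p : ℕ))
  · intro x hx
    simp only [Finset.mem_coe, Finset.mem_filter, Finset.mem_range] at hx
    simp only [Finset.mem_coe, Finset.mem_filter, Fintype.mem_piFinset, Finset.mem_range]
    refine ⟨fun p => Nat.mod_lt _ (by omega), ?_⟩
    rw [Fin.sum_univ_eq_sum_range (fun p => (x / b ^ p % b) ^ e) k, ← S_eq_sum b e hb he k x hx.1]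
    exact hx.2
  · intro d hd
    simp only [Finset.mem_coe, Finset.mem_filter, Fintype.mem_piFinset, Finset.mem_range] at hd
    obtain ⟨hlt, hfacts⟩ := sum_digits_facts b k d (fun p => hd.1 p)
    simp only [Finset.mem_coe, Finset.mem_filter, Finset.mem_range]
    refine ⟨hlt, ?_⟩
    rw [S_eq_sum b e hb he k _ hlt, ← Fin.sum_univ_eq_sum_range
      (fun p => ((∑ q : Fin k, d q * b ^ (q : ℕ)) / b ^ p % b) ^ e) k]
    rw [← hd.2]
    apply Finset.sum_congr rfl
    intro p _
    rw [hfacts p]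
  · intro x hx
    simp only [Finset.mem_coe, Finset.mem_filter, Finset.mem_range] at hx
    exact digits_sum_eq b k x hx.1
  · intro d hd
    simp only [Finset.mem_coe, Finset.mem_filter, Fintype.mem_piFinset, Finset.mem_range] at hd
    obtain ⟨_, hfacts⟩ := sum_digits_facts b k d (fun p => hd.1 p)
    funext p
    exact hfacts p

theorem stmt_6 (b e k m : ℕ) (hb : 2 ≤ b) (he : 2 ≤ e) (hk : 1 ≤ k) (hm : 1 ≤ m) :
    ((Finset.range (b ^ k)).filter (fun x => S e b x = m)).card =
      ∑ f ∈ ((Finset.Icc 2 (b - 1)).pi fun _ => Finset.range (m + 1)).filter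
          (fun f => ∑ i ∈ Finset.Icc 2 (b - 1), extendTuple b f i * i ^ e ≤ m),
        (∏ i ∈ Finset.Icc 2 (b - 1),
            Nat.choose (k - ∑ x ∈ Finset.Icc (i + 1) (b - 1), extendTuple b f x)
              (extendTuple b f i)) *
          Nat.choose (k - ∑ x ∈ Finset.Icc 2 (b - 1), extendTuple b f x)
            (m - ∑ x ∈ Finset.Icc 2 (b - 1), extendTuple b f x * x ^ e) := by
  classical
  rw [stepA b e k m hb (by omega)]
  have hIccsplit : Finset.Icc 1 (b - 1) = insert 1 (Finset.Icc 2 (b - 1)) := by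
    ext i
    simp only [Finset.mem_Icc, Finset.mem_insert]
    omega
  have hone : (1 : ℕ) ∉ Finset.Icc 2 (b - 1) := by simp
  -- grouping identity
  have hgroup : ∀ d : Fin k → ℕ, (∀ p, d p < b) →
      ∑ p : Fin k, d p ^ e = ∑ i ∈ Finset.Icc 1 (b - 1), cnt d i * i ^ e := by
    intro d hd
    have h1 : ∑ p : Fin k, d p ^ e = ∑ i ∈ Finset.range b, cnt d i * i ^ e := by
      rw [← Finset.sum_fiberwise_of_maps_to (g := d) (t := Finset.range b)
        (fun p _ => Finset.mem_range.2 (hd p)) (fun p => d p ^ e)]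
      apply Finset.sum_congr rfl
      intro i _
      unfold cnt
      rw [Finset.sum_congr rfl (fun p hp => by rw [(Finset.mem_filter.1 hp).2]),
        Finset.sum_const, smul_eq_mul]
    rw [h1]
    apply (Finset.sum_subset ?_ ?_).symm
    · intro i hi
      rw [Finset.mem_Icc] at hi
      rw [Finset.mem_range]
      omega
    · intro i hi hni
      rw [Finset.mem_range] at hi
      rw [Finset.mem_Icc] at hni
      have : i = 0 := by omega
      subst this
      simp [zero_pow (by omega : e ≠ 0)]
  have hφ : ∀ d ∈ (Fintype.piFinset fun _ : Fin k => Finset.range b).filter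
        (fun d => ∑ p : Fin k, d p ^ e = m),
      (fun i (_ : i ∈ Finset.Icc 2 (b - 1)) => cnt d i) ∈
        ((Finset.Icc 2 (b - 1)).pi fun _ => Finset.range (m + 1)).filter
          (fun f => ∑ i ∈ Finset.Icc 2 (b - 1), extendTuple b f i * i ^ e ≤ m) := by
    intro d hd
    simp only [Finset.mem_coe, Finset.mem_filter, Fintype.mem_piFinset, Finset.mem_range] at hd
    obtain ⟨hdlt, hdsum⟩ := hd
    have hgr := hgroup d hdlt
    have hterm : ∀ i ∈ Finset.Icc 2 (b - 1), cnt d i * i ^ e ≤ m := by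
      intro i hi
      have hi1 : i ∈ Finset.Icc 1 (b - 1) := by
        rw [Finset.mem_Icc] at hi ⊢; omega
      calc cnt d i * i ^ e ≤ ∑ j ∈ Finset.Icc 1 (b - 1), cnt d j * j ^ e :=
            Finset.single_le_sum (f := fun j => cnt d j * j ^ e) (fun _ _ => Nat.zero_le _) hi1
        _ = m := by rw [← hgr, hdsum]
    rw [Finset.mem_filter]
    constructor
    · rw [Finset.mem_pi]
      intro i hi
      rw [Finset.mem_range]
      have h1 := hterm i hi
      have hpos : 0 < i ^ e := by
        rw [Finset.mem_Icc] at hi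
        exact pow_pos (by omega) e
      have : cnt d i ≤ cnt d i * i ^ e := Nat.le_mul_of_pos_right _ hpos
      omega
    · have heq : ∑ i ∈ Finset.Icc 2 (b - 1),
          extendTuple b (fun i (_ : i ∈ Finset.Icc 2 (b - 1)) => cnt d i) i * i ^ e
          = ∑ i ∈ Finset.Icc 2 (b - 1), cnt d i * i ^ e := by
        apply Finset.sum_congr rfl
        intro i hi
        simp only [extendTuple]
        rw [dif_pos hi]
      rw [heq]
      calc ∑ i ∈ Finset.Icc 2 (b - 1), cnt d i * i ^ e
          ≤ ∑ i ∈ Finset.Icc 1 (b - 1), cnt d i * i ^ e := by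
            apply Finset.sum_le_sum_of_subset
            intro i hi
            rw [Finset.mem_Icc] at hi ⊢; omega
        _ = m := by rw [← hgr, hdsum]
  rw [Finset.card_eq_sum_card_fiberwise hφ]
  apply Finset.sum_congr rfl
  intro f hf
  obtain ⟨hfpi, hfle⟩ := Finset.mem_filter.1 hf
  set s1 := ∑ x ∈ Finset.Icc 2 (b - 1), extendTuple b f x * x ^ e with hs1
  set J : ℕ → ℕ := fun i => if i = 1 then m - s1 else extendTuple b f i with hJ
  have hJ1 : J 1 = m - s1 := by simp [hJ]
  have hJ2 : ∀ i ∈ Finset.Icc 2 (b - 1), J i = extendTuple b f i := by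
    intro i hi
    rw [Finset.mem_Icc] at hi
    simp only [hJ]
    rw [if_neg (by omega)]
  have hset : ((Fintype.piFinset fun _ : Fin k => Finset.range b).filter
        (fun d => ∑ p : Fin k, d p ^ e = m)).filter
        (fun d => (fun i (_ : i ∈ Finset.Icc 2 (b - 1)) => cnt d i) = f)
      = Dset (b - 1) (Finset.univ : Finset (Fin k)) J := by
    ext d
    simp only [Dset, Finset.mem_filter, Fintype.mem_piFinset, Finset.mem_range, Finset.mem_univ,
      if_true]
    have hb1 : b - 1 + 1 = b := by omega
    constructor
    · rintro ⟨⟨hdlt, hdsum⟩, hcnt⟩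
      have hcnt' : ∀ i, ∀ hi : i ∈ Finset.Icc 2 (b - 1), cnt d i = f i hi := by
        intro i hi
        exact congrFun (congrFun hcnt i) hi
      have hcntE : ∀ i ∈ Finset.Icc 2 (b - 1), cnt d i = extendTuple b f i := by
        intro i hi
        simp only [extendTuple]
        rw [dif_pos hi]
        exact hcnt' i hi
      have hsplit : ∑ i ∈ Finset.Icc 1 (b - 1), cnt d i * i ^ e
          = cnt d 1 * 1 ^ e + ∑ i ∈ Finset.Icc 2 (b - 1), cnt d i * i ^ e := by
        rw [hIccsplit, Finset.sum_insert hone]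
      have hs1' : ∑ i ∈ Finset.Icc 2 (b - 1), cnt d i * i ^ e = s1 := by
        rw [hs1]
        apply Finset.sum_congr rfl
        intro i hi
        rw [hcntE i hi]
      have hm' : cnt d 1 + s1 = m := by
        have := hgroup d hdlt
        rw [hdsum] at this
        rw [hsplit, hs1', one_pow, mul_one] at this
        omega
      refine ⟨fun p => by rw [hb1]; exact hdlt p, ?_⟩
      intro i hi
      rw [Finset.mem_Icc] at hi
      by_cases h1 : i = 1
      · subst h1
        rw [hJ1]
        omega
      · rw [hJ2 i (by rw [Finset.mem_Icc]; omega)]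
        exact hcntE i (by rw [Finset.mem_Icc]; omega)
    · rintro ⟨hdlt, hcnt⟩
      have hdlt' : ∀ p, d p < b := fun p => by have := hdlt p; omega
      have hcntE : ∀ i ∈ Finset.Icc 2 (b - 1), cnt d i = extendTuple b f i := by
        intro i hi
        have hi1 : i ∈ Finset.Icc 1 (b - 1) := by rw [Finset.mem_Icc] at hi ⊢; omega
        rw [hcnt i hi1, hJ2 i hi]
      have hs1' : ∑ i ∈ Finset.Icc 2 (b - 1), cnt d i * i ^ e = s1 := by
        rw [hs1]
        apply Finset.sum_congr rfl
        intro i hi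
        rw [hcntE i hi]
      have hc1 : cnt d 1 = m - s1 := by
        have := hcnt 1 (by rw [Finset.mem_Icc]; omega)
        rw [hJ1] at this
        exact this
      have hsum : ∑ p : Fin k, d p ^ e = m := by
        rw [hgroup d hdlt', hIccsplit, Finset.sum_insert hone, hs1', hc1, one_pow, mul_one]
        omega
      refine ⟨⟨hdlt', hsum⟩, ?_⟩
      funext i hi
      rw [hcntE i hi]
      simp only [extendTuple]
      rw [dif_pos hi]
  rw [hset, countC (b - 1) Finset.univ J]
  have hcard : (Finset.univ : Finset (Fin k)).card = k := by simp
  rw [hcard]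
  have hsumJ : ∀ a : ℕ, 2 ≤ a → ∑ x ∈ Finset.Icc a (b - 1), J x
      = ∑ x ∈ Finset.Icc a (b - 1), extendTuple b f x := by
    intro a ha
    apply Finset.sum_congr rfl
    intro x hx
    rw [Finset.mem_Icc] at hx
    exact hJ2 x (by rw [Finset.mem_Icc]; omega)
  rw [hIccsplit, Finset.prod_insert hone]
  rw [mul_comm]
  congr 1
  · apply Finset.prod_congr rfl
    intro i hi
    rw [Finset.mem_Icc] at hi
    rw [hJ2 i (by rw [Finset.mem_Icc]; omega), hsumJ (i + 1) (by omega)]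
  · rw [hJ1, hsumJ 2 (by omega)]
end
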